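/- (Converse bound, Theorem 1.) In the distributed linearly separable computation model, assume N divides K, let Z be an assignment in which every dataset is assigned to exactly N − N_r + 1 workers and |Z n| ≤ (K/N)·(N − N_r + 1) for every worker n, and suppose the scheme is correct for a demand matrix F ∈ Matrix (Fin K_c) (Fin K) 𝔽_q such that rank(F^{(G)}) = min(K_c, |G|) for every subset G ⊆ Fin K of columns. Then for every A ⊆ Fin N with |A| = N_r, the total answer length satisfies Σ_{n ∈ A} T_n ≥ max( N_r · min(K_c, ⌈K / C(N, N − N_r + 1)⌉), K_c ) · L, where C(·,·) denotes the binomial coefficient. -/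

import Mathlib

open Matrix

lemma aux_inj_le {𝔽 : Type} [Field 𝔽] [Fintype 𝔽] {a b c : ℕ}
    (f : (Fin a → Fin b → 𝔽) → (Fin c → 𝔽)) (hf : Function.Injective f) : a * b ≤ c := by
  have h := Fintype.card_le_of_injective f hf
  simp only [Fintype.card_fun, Fintype.card_fin] at h
  rw [← pow_mul, Nat.mul_comm b a] at h
  exact (Nat.pow_le_pow_iff_right Fintype.one_lt_card).mp h

lemma aux_section {𝔽 : Type} [Field 𝔽] {ι : Type} [Fintype ι] [DecidableEq ι]
    {Kc r : ℕ} (M : Matrix (Fin Kc) ι 𝔽) (h : M.rank = r) :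
    ∃ E : (Fin r → 𝔽) →ₗ[𝔽] (ι → 𝔽), Function.Injective (fun x => M.mulVec (E x)) := by
  have hfin : Module.finrank 𝔽 (LinearMap.range M.mulVecLin) = r := h
  let b : Module.Basis (Fin r) 𝔽 (LinearMap.range M.mulVecLin) :=
    Module.finBasisOfFinrankEq 𝔽 _ hfin
  choose v hv using fun i => (b i).2
  refine ⟨(Pi.basisFun 𝔽 (Fin r)).constr 𝔽 v, ?_⟩
  intro x y hxy
  have hx : ∀ z : Fin r → 𝔽, M.mulVec ((Pi.basisFun 𝔽 (Fin r)).constr 𝔽 v z)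
      = ((∑ i, z i • b i : LinearMap.range M.mulVecLin) : Fin Kc → 𝔽) := by
    intro z
    rw [Module.Basis.constr_apply_fintype]
    simp only [Pi.basisFun_equivFun, LinearEquiv.refl_apply]
    have h1 : M.mulVec (∑ i, z i • v i) = ∑ i, z i • (M.mulVecLin (v i)) := by
      rw [← mulVecLin_apply, map_sum]
      exact Finset.sum_congr rfl fun i _ => LinearMap.map_smul _ _ _
    rw [h1]
    simp only [hv]
    rw [Submodule.coe_sum]
    exact Finset.sum_congr rfl fun i _ => rfl
  simp only at hxy
  rw [hx x, hx y] at hxy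
  have h2 : (∑ i, x i • b i : LinearMap.range M.mulVecLin) = ∑ i, y i • b i :=
    Subtype.ext hxy
  have h5 : ∑ i, (x i - y i) • b i = 0 := by
    have heq : ∑ i, (x i - y i) • b i = (∑ i, x i • b i) - ∑ i, y i • b i := by
      rw [← Finset.sum_sub_distrib]
      exact Finset.sum_congr rfl fun i _ => sub_smul (x i) (y i) (b i)
    rw [heq, h2, sub_self]
  have h6 := (Fintype.linearIndependent_iff.mp b.linearIndependent) (fun i => x i - y i) h5
  funext i
  have h7 : x i - y i = 0 := h6 i
  exact sub_eq_zero.mp h7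

lemma aux_surj {𝔽 : Type} [Field 𝔽] {ι : Type} [Fintype ι] [DecidableEq ι]
    {Kc : ℕ} (M : Matrix (Fin Kc) ι 𝔽) (h : M.rank = Kc) :
    Function.Surjective M.mulVec := by
  have hfin : Module.finrank 𝔽 (LinearMap.range M.mulVecLin) = Kc := h
  have htop : LinearMap.range M.mulVecLin = ⊤ := by
    apply Submodule.eq_top_of_finrank_eq
    rw [hfin]
    simp [Module.finrank_pi]
  intro y
  obtain ⟨w, hw⟩ := LinearMap.range_eq_top.mp htop y
  exact ⟨w, hw⟩

lemma aux_sum_eq_of_le {α : Type} (s : Finset α) (f : α → ℕ) (c : ℕ)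
    (hle : ∀ i ∈ s, f i ≤ c) (hsum : ∑ i ∈ s, f i = s.card * c) :
    ∀ i ∈ s, f i = c := by
  by_contra hcon
  push_neg at hcon
  obtain ⟨i, hi, hne⟩ := hcon
  have hlt : f i < c := lt_of_le_of_ne (hle i hi) hne
  have : ∑ j ∈ s, f j < ∑ j ∈ s, c :=
    Finset.sum_lt_sum (fun j hj => hle j hj) ⟨i, hi, hlt⟩
  rw [Finset.sum_const, smul_eq_mul] at this
  omega

/-- Converse bound, Theorem 1: with `N ∣ K`, an assignment in which every
dataset is assigned to exactly `N − N_r + 1` workers and every worker gets at most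
`(K/N)(N − N_r + 1)` datasets, and a demand matrix `F` with `rank(F^{(G)}) = min(K_c, |G|)`
for every column set `G`, any correct scheme satisfies, for every set `A` of `N_r` workers,
`∑_{n ∈ A} T_n ≥ max( N_r · min(K_c, ⌈K / C(N, N − N_r + 1)⌉), K_c ) · L`. -/
theorem stmt_4
    {𝔽 : Type} [Field 𝔽] [Fintype 𝔽]
    (K L N Nr Kc : ℕ)
    (hK : 0 < K) (hL : 0 < L) (hN : 0 < N) (hNr : 0 < Nr) (hKcpos : 0 < Kc)
    (hNrN : Nr ≤ N) (hKcK : Kc ≤ K) (hNK : N ∣ K)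
    (Z : Fin N → Finset (Fin K))
    (hexact : ∀ k : Fin K, (Finset.univ.filter fun n : Fin N => k ∈ Z n).card = N - Nr + 1)
    (hsize : ∀ n : Fin N, (Z n).card ≤ K / N * (N - Nr + 1))
    (T : Fin N → ℕ)
    (ψ : (n : Fin N) → (Fin K → Fin L → 𝔽) → (Fin (T n) → 𝔽))
    (hψ : ∀ (n : Fin N) (W W' : Fin K → Fin L → 𝔽),
      (∀ k ∈ Z n, W k = W' k) → ψ n W = ψ n W')
    (F : Matrix (Fin Kc) (Fin K) 𝔽)
    (hrank : ∀ G : Finset (Fin K),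
      (F.submatrix id (fun j : {x // x ∈ G} => j.val)).rank = min Kc G.card)
    (hcor : ∀ A : Finset (Fin N), A.card = Nr →
      ∃ φ : ((n : {m : Fin N // m ∈ A}) → (Fin (T n.val) → 𝔽)) → Matrix (Fin Kc) (Fin L) 𝔽,
        ∀ W : Fin K → Fin L → 𝔽, φ (fun n => ψ n.val W) = F * Matrix.of W) :
    ∀ A : Finset (Fin N), A.card = Nr →
      max (Nr * min Kc ⌈(K : ℚ) / (N.choose (N - Nr + 1) : ℚ)⌉₊) Kc * L ≤ ∑ n ∈ A, T n := by
  classical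
  intro A hA
  set c : ℕ := N.choose (N - Nr + 1) with hc
  set c1 : ℕ := (N - 1).choose (N - Nr) with hc1
  set c0 : ℕ := K / N * (N - Nr + 1) with hc0
  have hcpos : 0 < c := Nat.choose_pos (by omega)
  have hNc1 : N * c1 = c * (N - Nr + 1) := by
    have hN1 : N - 1 + 1 = N := Nat.succ_pred_eq_of_pos hN
    have h := Nat.add_one_mul_choose_eq (N - 1) (N - Nr)
    rw [hN1] at h
    exact h
  have hNc0 : N * c0 = K * (N - Nr + 1) := by
    rw [hc0, ← mul_assoc, Nat.mul_div_cancel' hNK]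
  -- every worker has exactly c0 datasets
  have hdouble : ∑ n : Fin N, (Z n).card = K * (N - Nr + 1) := by
    have h1 : ∀ n : Fin N, (Z n).card = ∑ k : Fin K, if k ∈ Z n then 1 else 0 := by
      intro n
      rw [Finset.sum_ite_mem, Finset.univ_inter, Finset.sum_const, smul_eq_mul, mul_one]
    have h2 : ∀ k : Fin K,
        (Finset.univ.filter fun n : Fin N => k ∈ Z n).card
          = ∑ n : Fin N, if k ∈ Z n then 1 else 0 := fun k => Finset.card_filter _ _
    calc ∑ n : Fin N, (Z n).card
        = ∑ n : Fin N, ∑ k : Fin K, if k ∈ Z n then 1 else 0 := by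
          exact Finset.sum_congr rfl fun n _ => h1 n
      _ = ∑ k : Fin K, ∑ n : Fin N, if k ∈ Z n then 1 else 0 := Finset.sum_comm
      _ = ∑ k : Fin K, (N - Nr + 1) := by
          exact Finset.sum_congr rfl fun k _ => by rw [← h2 k, hexact k]
      _ = K * (N - Nr + 1) := by
          rw [Finset.sum_const, Finset.card_univ, Fintype.card_fin, smul_eq_mul]
  have hZcard : ∀ n : Fin N, (Z n).card = c0 := by
    have := aux_sum_eq_of_le Finset.univ (fun n : Fin N => (Z n).card) c0
      (fun n _ => hsize n)
      (by rw [hdouble, Finset.card_univ, Fintype.card_fin, hNc0])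
    exact fun n => this n (Finset.mem_univ n)
  -- per-worker bound
  have key : ∀ n : Fin N, min Kc ⌈(K : ℚ) / (c : ℚ)⌉₊ * L ≤ T n := by
    intro n
    set pat : Fin K → Finset (Fin N) := fun k => Finset.univ.filter fun m => k ∈ Z m with hpat
    have hpatcard : ∀ k, (pat k).card = N - Nr + 1 := hexact
    have hpatmem : ∀ k m', m' ∈ pat k ↔ k ∈ Z m' := by
      intro k m'; simp [hpat]
    set I := (Z n).image pat with hI
    have hIcard : I.card ≤ c1 := by
      have hsub : I ⊆ (Finset.powersetCard (N - Nr) (Finset.univ.erase n)).image (insert n) := by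
        intro P hP
        rw [hI, Finset.mem_image] at hP
        obtain ⟨k, hk, rfl⟩ := hP
        rw [Finset.mem_image]
        refine ⟨(pat k).erase n, ?_, Finset.insert_erase ((hpatmem k n).mpr hk)⟩
        rw [Finset.mem_powersetCard]
        constructor
        · intro m' hm'
          rw [Finset.mem_erase] at hm'
          exact Finset.mem_erase.mpr ⟨hm'.1, Finset.mem_univ m'⟩
        · rw [Finset.card_erase_of_mem ((hpatmem k n).mpr hk), hpatcard]
          omega
      calc I.card ≤ _ := Finset.card_le_card hsub
        _ ≤ (Finset.powersetCard (N - Nr) (Finset.univ.erase n)).card := Finset.card_image_le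
        _ = c1 := by
            rw [Finset.card_powersetCard, Finset.card_erase_of_mem (Finset.mem_univ n),
              Finset.card_univ, Fintype.card_fin]
    have hZn : (Z n).card = c0 := hZcard n
    have hc0pos : 0 < c0 := by
      have h1 : 1 ≤ K / N := (Nat.one_le_div_iff hN).mpr (Nat.le_of_dvd hK hNK)
      have h2 : 0 < N - Nr + 1 := by omega
      exact Nat.mul_pos h1 h2
    have hZnne : (Z n).Nonempty := by
      rw [← Finset.card_pos, hZn]; exact hc0pos
    have hIne : I.Nonempty := hZnne.image pat
    have hfib : ∑ P ∈ I, ((Z n).filter fun k => pat k = P).card = (Z n).card :=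
      (Finset.card_eq_sum_card_fiberwise (fun k hk => Finset.mem_image_of_mem pat hk)).symm
    obtain ⟨P0, hP0I, hP0max⟩ :=
      Finset.exists_max_image I (fun P => ((Z n).filter fun k => pat k = P).card) hIne
    set S := (Z n).filter fun k => pat k = P0 with hS
    set m := S.card with hm
    have hcount : c0 ≤ c1 * m := by
      calc c0 = ∑ P ∈ I, ((Z n).filter fun k => pat k = P).card := by rw [hfib, hZn]
        _ ≤ I.card * m := by
            rw [← smul_eq_mul]
            exact Finset.sum_le_card_nsmul I _ m (fun P hP => hP0max P hP)
        _ ≤ c1 * m := Nat.mul_le_mul_right m hIcard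
    have hKmc : K ≤ m * c := by
      have h2 : K * (N - Nr + 1) ≤ (c * (N - Nr + 1)) * m := by
        calc K * (N - Nr + 1) = N * c0 := hNc0.symm
          _ ≤ N * (c1 * m) := Nat.mul_le_mul_left N hcount
          _ = (N * c1) * m := (mul_assoc N c1 m).symm
          _ = (c * (N - Nr + 1)) * m := by rw [hNc1]
      have h3 : K * (N - Nr + 1) ≤ (m * c) * (N - Nr + 1) := by
        calc K * (N - Nr + 1) ≤ (c * (N - Nr + 1)) * m := h2
          _ = (m * c) * (N - Nr + 1) := by ring
      exact Nat.le_of_mul_le_mul_right h3 (by omega)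
    have hceil : ⌈(K : ℚ) / (c : ℚ)⌉₊ ≤ m := by
      rw [Nat.ceil_le, div_le_iff₀ (by exact_mod_cast hcpos)]
      exact_mod_cast hKmc
    -- properties of P0 and S
    obtain ⟨k0, hk0, hpk0⟩ := Finset.mem_image.mp hP0I
    have hnP0 : n ∈ P0 := by rw [← hpk0]; exact (hpatmem k0 n).mpr hk0
    have hP0card : P0.card = N - Nr + 1 := by rw [← hpk0]; exact hpatcard k0
    -- the recovery set of workers
    set An := insert n (Finset.univ \ P0) with hAn
    have hninsd : n ∉ Finset.univ \ P0 := by simp [hnP0]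
    have hAncard : An.card = Nr := by
      rw [hAn, Finset.card_insert_of_notMem hninsd,
        Finset.card_sdiff_of_subset (Finset.subset_univ P0), Finset.card_univ, Fintype.card_fin, hP0card]
      omega
    obtain ⟨φ, hφ⟩ := hcor An hAncard
    -- rank and section
    set M := F.submatrix id (fun j : {x // x ∈ S} => j.val) with hM
    set r := min Kc m with hr
    obtain ⟨E, hE⟩ := aux_section M (by rw [hM, hrank S, ← hm, ← hr])
    -- the test messages
    set Wof : (Fin r → Fin L → 𝔽) → Fin K → Fin L → 𝔽 :=
      fun X k l => if h : k ∈ S then E (fun i => X i l) ⟨k, h⟩ else 0 with hWof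
    have hW0 : ∀ X k, k ∉ S → Wof X k = 0 := by
      intro X k hk; funext l; simp [hWof, hk]
    have hFW : ∀ X (i : Fin Kc) (l : Fin L),
        (F * Matrix.of (Wof X)) i l = M.mulVec (E (fun i' => X i' l)) i := by
      intro X i l
      rw [Matrix.mul_apply, Matrix.mulVec, dotProduct, Finset.univ_eq_attach]
      rw [← Finset.sum_subset (Finset.subset_univ S)
        (fun x _ hx => by simp [Matrix.of_apply, hWof, hx])]
      rw [← Finset.sum_attach S (fun j => F i j * Matrix.of (Wof X) j l)]
      refine Finset.sum_congr rfl fun j _ => ?_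
      simp only [Matrix.of_apply, hWof, hM, Matrix.submatrix_apply, id_eq]
      rw [dif_pos j.2]
    have hpsi0 : ∀ X (m' : Fin N), m' ∈ An → m' ≠ n →
        ψ m' (Wof X) = ψ m' (fun _ _ => 0) := by
      intro X m' hm' hmn
      apply hψ
      intro k hk
      apply hW0
      intro hkS
      have hpatk : pat k = P0 := (Finset.mem_filter.mp hkS).2
      have : m' ∈ P0 := by rw [← hpatk]; exact (hpatmem k m').mpr hk
      rcases Finset.mem_insert.mp hm' with h | h
      · exact hmn h
      · exact (Finset.mem_sdiff.mp h).2 this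
    have hinj : Function.Injective (fun X : Fin r → Fin L → 𝔽 => ψ n (Wof X)) := by
      intro X X' hXX'
      simp only at hXX'
      have htup : (fun (m' : {x // x ∈ An}) => ψ m'.val (Wof X))
          = (fun (m' : {x // x ∈ An}) => ψ m'.val (Wof X')) := by
        funext m'
        rcases m' with ⟨mv, hmv⟩
        dsimp only
        by_cases hmn : mv = n
        · subst hmn; exact hXX'
        · rw [hpsi0 X mv hmv hmn, hpsi0 X' mv hmv hmn]
      have hφeq := congrArg φ htup
      rw [hφ (Wof X), hφ (Wof X')] at hφeq
      funext i l
      have hcol : (fun x => M.mulVec (E x)) (fun i' => X i' l)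
          = (fun x => M.mulVec (E x)) (fun i' => X' i' l) := by
        show M.mulVec (E (fun i' => X i' l)) = M.mulVec (E (fun i' => X' i' l))
        funext i''
        rw [← hFW X i'' l, ← hFW X' i'' l, hφeq]
      exact congrFun (hE hcol) i
    have := aux_inj_le _ hinj
    have hmin : min Kc ⌈(K : ℚ) / (c : ℚ)⌉₊ ≤ r := min_le_min (le_refl Kc) hceil
    calc min Kc ⌈(K : ℚ) / (c : ℚ)⌉₊ * L ≤ r * L := Nat.mul_le_mul_right L hmin
      _ ≤ T n := this
  -- the Kc bound
  have key2 : Kc * L ≤ ∑ n ∈ A, T n := by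
    obtain ⟨φ, hφ⟩ := hcor A hA
    have hrk : (F.submatrix id
        (fun j : {x // x ∈ (Finset.univ : Finset (Fin K))} => j.val)).rank = Kc := by
      rw [hrank Finset.univ, Finset.card_univ, Fintype.card_fin]
      exact min_eq_left hKcK
    have hsurj := aux_surj _ hrk
    have hφs : Function.Surjective φ := by
      intro Y
      choose v hv using fun l : Fin L => hsurj (fun i => Y i l)
      refine ⟨fun n' => ψ n'.val (fun k l => v l ⟨k, Finset.mem_univ k⟩), ?_⟩
      rw [hφ]
      funext i l
      rw [Matrix.mul_apply]
      have h2 := congrFun (hv l) i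
      rw [Matrix.mulVec, dotProduct] at h2
      simp only [Matrix.submatrix_apply, id_eq] at h2
      rw [← h2]
      exact Fintype.sum_equiv (Equiv.subtypeUnivEquiv (fun x => Finset.mem_univ x)).symm
        _ _ (fun j => rfl)
    have hcard := Fintype.card_le_of_surjective φ hφs
    have hcL : Fintype.card (Matrix (Fin Kc) (Fin L) 𝔽) = Fintype.card 𝔽 ^ (Kc * L) := by
      rw [Fintype.card_congr (Matrix.of.symm : Matrix (Fin Kc) (Fin L) 𝔽 ≃ (Fin Kc → Fin L → 𝔽))]
      simp only [Fintype.card_fun, Fintype.card_fin]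
      rw [← pow_mul, Nat.mul_comm]
    have hcR : Fintype.card ((n : {m // m ∈ A}) → Fin (T n.val) → 𝔽)
        = Fintype.card 𝔽 ^ (∑ n ∈ A, T n) := by
      rw [Fintype.card_pi]
      simp only [Fintype.card_fun, Fintype.card_fin]
      rw [Finset.univ_eq_attach, Finset.prod_pow_eq_pow_sum]
      congr 1
      exact Finset.sum_attach A T
    rw [hcL, hcR] at hcard
    exact (Nat.pow_le_pow_iff_right Fintype.one_lt_card).mp hcard
  -- combine
  have key1 : Nr * min Kc ⌈(K : ℚ) / (c : ℚ)⌉₊ * L ≤ ∑ n ∈ A, T n := by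
    calc Nr * min Kc ⌈(K : ℚ) / (c : ℚ)⌉₊ * L
        = ∑ _n ∈ A, min Kc ⌈(K : ℚ) / (c : ℚ)⌉₊ * L := by
          rw [Finset.sum_const, hA, smul_eq_mul, mul_assoc]
      _ ≤ ∑ n ∈ A, T n := Finset.sum_le_sum fun n _ => key n
  rcases max_cases (Nr * min Kc ⌈(K : ℚ) / (c : ℚ)⌉₊) Kc with ⟨heq, _⟩ | ⟨heq, _⟩ <;> rw [heq]
  · exact key1
  · exact key2
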